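/- Let m ≥ 3, b ∈ {0,1}, P_{m,b} = {(a_1,…,a_m) ∈ {0,1}^m : a_1 ⊕ ⋯ ⊕ a_m = b}, and let π be the uniform distribution on P_{m,b}. If 0 < δ < 1/(2(m+1)) and f_1,…,f_m : {0,1}^n → {0,1} is a (π,δ)-approximate generalized polymorphism of P_{m,b}, then there exist a single set S ⊆ [n] and bits b_1,…,b_m ∈ {0,1} such that Pr_{x ~ uniform({0,1}^n)}[f_j(x) ≠ χ_{S,b_j}(x)] ≤ δ for every j ∈ [m], and the tuple (χ_{S,b_1},…,χ_{S,b_m}) is a generalized polymorphism of P_{m,b}. -/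

import Mathlib

open Finset

attribute [local instance 10] Classical.propDecidable

noncomputable section

/-- The XOR `⊕_{i ∈ S} x_i`. -/
def parity {k : ℕ} (S : Finset (Fin k)) (x : Fin k → Bool) : Bool :=
  decide ((S.filter fun i => x i = true).card % 2 = 1)

/-- The (possibly negated) character `χ_{S,b}(x) = b ⊕ ⊕_{i ∈ S} x_i`. -/
def chi {k : ℕ} (S : Finset (Fin k)) (b : Bool) (x : Fin k → Bool) : Bool :=
  xor b (parity S x)

/-- The parity predicate `P_{m,b} = {a ∈ {0,1}^m : a₁ ⊕ ⋯ ⊕ a_m = b}`. -/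
def parityPred (m : ℕ) (b : Bool) : Finset (Fin m → Bool) :=
  Finset.univ.filter fun a => parity Finset.univ a = b

/-- The uniform distribution on `P_{m,b}`. -/
def unifParity (m : ℕ) (b : Bool) : (Fin m → Bool) → ℝ :=
  fun w => if w ∈ parityPred m b then ((parityPred m b).card : ℝ)⁻¹ else 0

/-- `f₁, …, f_m` is a generalized polymorphism of the predicate `P ⊆ {0,1}^m`. -/
def IsGenPoly {m n : ℕ} (P : Finset (Fin m → Bool)) (f : Fin m → (Fin n → Bool) → Bool) : Prop :=
  ∀ x : Fin n → (Fin m → Bool), (∀ i, x i ∈ P) →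
    (fun j => f j (fun i => x i j)) ∈ P

/-- The probability, when the `n` columns are drawn i.i.d. from `μ`, that
`(f₁(x⁽¹⁾), …, f_m(x⁽ᵐ⁾)) ∈ P`. -/
def polyProb {m n : ℕ} (μ : (Fin m → Bool) → ℝ) (P : Finset (Fin m → Bool))
    (f : Fin m → (Fin n → Bool) → Bool) : ℝ :=
  ∑ x : Fin n → (Fin m → Bool), (∏ i, μ (x i)) *
    (if (fun j => f j (fun i => x i j)) ∈ P then 1 else 0)

namespace LT

def sgn (b : Bool) : ℝ := if b then -1 else 1

lemma sgn_mul_self (b : Bool) : sgn b * sgn b = 1 := by cases b <;> simp [sgn]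

lemma abs_sgn (b : Bool) : |sgn b| = 1 := by cases b <;> simp [sgn]

lemma sgn_xor (u v : Bool) : sgn (xor u v) = sgn u * sgn v := by
  cases u <;> cases v <;> simp [sgn]

def chiR {k : ℕ} (S : Finset (Fin k)) (x : Fin k → Bool) : ℝ := ∏ i ∈ S, sgn (x i)

lemma sum_pi_prod {k : ℕ} {β : Type*} [Fintype β] (c : Fin k → β → ℝ) :
    ∑ x : Fin k → β, ∏ i, c i (x i) = ∏ i, ∑ a : β, c i a := by
  classical
  rw [Finset.prod_univ_sum]
  rw [Fintype.piFinset_univ]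

lemma prod_ite_mem_univ {k : ℕ} (S : Finset (Fin k)) (f : Fin k → ℝ) :
    (∏ i, (if i ∈ S then f i else 1)) = ∏ i ∈ S, f i := by
  rw [Finset.prod_ite_mem, Finset.univ_inter]

lemma chiR_eq_sgn_parity {k : ℕ} (S : Finset (Fin k)) (x : Fin k → Bool) :
    chiR S x = sgn (parity S x) := by
  have h : chiR S x = (-1 : ℝ) ^ (S.filter fun i => x i = true).card := by
    rw [chiR, ← Finset.prod_filter_mul_prod_filter_not S (fun i => x i = true)]
    have h1 : ∀ i ∈ S.filter (fun i => x i = true), sgn (x i) = -1 := by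
      intro i hi
      rw [Finset.mem_filter] at hi
      simp [sgn, hi.2]
    have h2 : ∀ i ∈ S.filter (fun i => ¬ x i = true), sgn (x i) = 1 := by
      intro i hi
      rw [Finset.mem_filter] at hi
      simp [sgn, Bool.not_eq_true _ ▸ hi.2]
    rw [Finset.prod_congr rfl h1, Finset.prod_congr rfl h2, Finset.prod_const,
      Finset.prod_const, one_pow, mul_one]
  rw [h, parity]
  rcases Nat.even_or_odd ((S.filter fun i => x i = true).card) with he | ho
  · rw [he.neg_one_pow]
    have : ¬ ((S.filter fun i => x i = true).card % 2 = 1) := by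
      rw [Nat.even_iff] at he; omega
    simp [sgn, this]
  · rw [ho.neg_one_pow]
    have : ((S.filter fun i => x i = true).card % 2 = 1) := by
      rw [Nat.odd_iff] at ho; omega
    simp [sgn, this]

lemma orth {k : ℕ} (S T : Finset (Fin k)) :
    ∑ x : Fin k → Bool, chiR S x * chiR T x = if S = T then (2:ℝ)^k else 0 := by
  have hx : ∀ x : Fin k → Bool, chiR S x * chiR T x
      = ∏ i, ((if i ∈ S then sgn (x i) else 1) * (if i ∈ T then sgn (x i) else 1)) := by
    intro x
    rw [Finset.prod_mul_distrib, prod_ite_mem_univ, prod_ite_mem_univ]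
    rfl
  simp only [hx]
  rw [sum_pi_prod (fun i a => (if i ∈ S then sgn a else 1) * (if i ∈ T then sgn a else 1))]
  by_cases h : S = T
  · subst h
    rw [if_pos rfl]
    have hfac : ∀ i : Fin k,
        (∑ a : Bool, ((if i ∈ S then sgn a else 1) * (if i ∈ S then sgn a else 1))) = 2 := by
      intro i
      by_cases hi : i ∈ S <;> simp [hi, sgn, Fintype.sum_bool] <;> norm_num
    rw [Finset.prod_congr rfl fun i _ => hfac i, Finset.prod_const, Finset.card_univ,
      Fintype.card_fin]
  · rw [if_neg h]
    obtain ⟨i, hi⟩ : ∃ i, ¬(i ∈ S ↔ i ∈ T) := by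
      by_contra hc
      push_neg at hc
      exact h (Finset.ext fun i => hc i)
    refine Finset.prod_eq_zero (Finset.mem_univ i) ?_
    by_cases hiS : i ∈ S <;> by_cases hiT : i ∈ T <;>
      simp [hiS, hiT, sgn, Fintype.sum_bool] at hi ⊢


lemma orth_pt {k : ℕ} (x y : Fin k → Bool) :
    ∑ S : Finset (Fin k), chiR S x * chiR S y = if x = y then (2:ℝ)^k else 0 := by
  have h1 : ∀ S : Finset (Fin k), chiR S x * chiR S y
      = (∏ i ∈ S, (sgn (x i) * sgn (y i))) * ∏ _i ∈ Finset.univ \ S, (1:ℝ) := by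
    intro S
    rw [chiR, chiR, ← Finset.prod_mul_distrib, Finset.prod_const_one, mul_one]
  simp only [h1]
  have h2 := (Finset.prod_add (fun i => sgn (x i) * sgn (y i)) (fun _ => (1:ℝ))
    (Finset.univ : Finset (Fin k))).symm
  rw [Finset.powerset_univ] at h2
  rw [h2]
  by_cases h : x = y
  · subst h
    rw [if_pos rfl]
    have hfac : ∀ i : Fin k, sgn (x i) * sgn (x i) + 1 = 2 := by
      intro i; rw [sgn_mul_self]; norm_num
    rw [Finset.prod_congr rfl fun i _ => hfac i, Finset.prod_const, Finset.card_univ,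
      Fintype.card_fin]
  · rw [if_neg h]
    obtain ⟨i, hi⟩ : ∃ i, x i ≠ y i := by
      by_contra hc
      push_neg at hc
      exact h (funext hc)
    refine Finset.prod_eq_zero (Finset.mem_univ i) ?_
    cases hx : x i <;> cases hy : y i <;> simp_all [sgn] <;> norm_num

def fc {k : ℕ} (G : (Fin k → Bool) → ℝ) (S : Finset (Fin k)) : ℝ :=
  ((2:ℝ)^k)⁻¹ * ∑ x : Fin k → Bool, G x * chiR S x

def sg {k : ℕ} (g : (Fin k → Bool) → Bool) : (Fin k → Bool) → ℝ := fun x => sgn (g x)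

lemma inversion {k : ℕ} (G : (Fin k → Bool) → ℝ) (y : Fin k → Bool) :
    ∑ S : Finset (Fin k), fc G S * chiR S y = G y := by
  have h2k : ((2:ℝ)^k) ≠ 0 := by positivity
  have h1 : ∀ S : Finset (Fin k), fc G S * chiR S y
      = ((2:ℝ)^k)⁻¹ * ∑ x : Fin k → Bool, G x * (chiR S x * chiR S y) := by
    intro S
    rw [fc, mul_assoc, Finset.sum_mul]
    congr 1
    exact Finset.sum_congr rfl fun x _ => by ring
  simp only [h1]
  rw [← Finset.mul_sum, Finset.sum_comm]
  have h3 : ∀ x : Fin k → Bool,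
      ∑ S : Finset (Fin k), G x * (chiR S x * chiR S y) = G x * (if x = y then (2:ℝ)^k else 0) := by
    intro x
    rw [← Finset.mul_sum, orth_pt]
  rw [Finset.sum_congr rfl fun x _ => h3 x]
  have h4 : ∀ x : Fin k → Bool, G x * (if x = y then (2:ℝ)^k else 0)
      = if x = y then G x * (2:ℝ)^k else 0 := fun x => by split <;> simp
  rw [Finset.sum_congr rfl fun x _ => h4 x, Finset.sum_ite_eq' Finset.univ y]
  rw [if_pos (Finset.mem_univ y)]
  field_simp

lemma parseval {k : ℕ} (g : (Fin k → Bool) → Bool) :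
    ∑ S : Finset (Fin k), (fc (sg g) S)^2 = 1 := by
  have h2k : ((2:ℝ)^k) ≠ 0 := by positivity
  have h1 : ∀ S : Finset (Fin k), (fc (sg g) S)^2
      = ((2:ℝ)^k)⁻¹ * ∑ x : Fin k → Bool, sg g x * (fc (sg g) S * chiR S x) := by
    intro S
    have hh : ∑ x : Fin k → Bool, sg g x * (fc (sg g) S * chiR S x)
        = fc (sg g) S * ∑ x : Fin k → Bool, sg g x * chiR S x := by
      rw [Finset.mul_sum]
      exact Finset.sum_congr rfl fun x _ => by ring
    rw [hh, sq]
    nth_rewrite 2 [fc]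
    ring
  simp only [h1]
  rw [← Finset.mul_sum, Finset.sum_comm]
  have h3 : ∀ x : Fin k → Bool,
      ∑ S : Finset (Fin k), sg g x * (fc (sg g) S * chiR S x) = sg g x * sg g x := by
    intro x
    rw [← Finset.mul_sum, inversion]
  rw [Finset.sum_congr rfl fun x _ => h3 x]
  have h4 : ∀ x : Fin k → Bool, sg g x * sg g x = 1 := fun x => sgn_mul_self _
  rw [Finset.sum_congr rfl fun x _ => h4 x, Finset.sum_const, Finset.card_univ]
  simp [Fintype.card_fun]

lemma abs_fc_le_one {k : ℕ} (g : (Fin k → Bool) → Bool) (S : Finset (Fin k)) :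
    |fc (sg g) S| ≤ 1 := by
  have h1 : (fc (sg g) S)^2 ≤ 1 := by
    rw [← parseval g]
    exact Finset.single_le_sum (f := fun T => (fc (sg g) T)^2) (fun T _ => sq_nonneg _) (Finset.mem_univ S)
  have h2 : |fc (sg g) S|^2 ≤ 1 := by rwa [sq_abs]
  nlinarith [abs_nonneg (fc (sg g) S)]

lemma sg_chi {k : ℕ} (S : Finset (Fin k)) (b' : Bool) (y : Fin k → Bool) :
    sg (chi S b') y = sgn b' * chiR S y := by
  rw [sg, chi, sgn_xor, chiR_eq_sgn_parity]

lemma fc_chi {k : ℕ} (S T : Finset (Fin k)) (b' : Bool) :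
    fc (sg (chi S b')) T = if T = S then sgn b' else 0 := by
  have h2k : ((2:ℝ)^k) ≠ 0 := by positivity
  rw [fc]
  have h1 : ∀ y : Fin k → Bool, sg (chi S b') y * chiR T y = sgn b' * (chiR S y * chiR T y) := by
    intro y; rw [sg_chi]; ring
  rw [Finset.sum_congr rfl fun y _ => h1 y, ← Finset.mul_sum, orth]
  by_cases h : T = S
  · subst h; rw [if_pos rfl, if_pos rfl]; field_simp
  · rw [if_neg h, if_neg (fun hh => h hh.symm)]; ring


lemma indparity {m : ℕ} (b : Bool) (a : Fin m → Bool) :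
    (if parity Finset.univ a = b then (1:ℝ) else 0) = (1 + sgn b * chiR Finset.univ a) / 2 := by
  rw [chiR_eq_sgn_parity]
  by_cases hp : parity Finset.univ a = b
  · rw [if_pos hp, hp, sgn_mul_self]; norm_num
  · rw [if_neg hp]
    cases b <;> cases hq : parity Finset.univ a <;> simp_all [sgn] <;> norm_num

lemma predsum {m : ℕ} (hm : 0 < m) (b : Bool) (T : Finset (Fin m)) :
    ∑ a ∈ parityPred m b, chiR T a
      = if T = ∅ then (2:ℝ)^m / 2
        else if T = Finset.univ then sgn b * ((2:ℝ)^m / 2) else 0 := by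
  have huniv : (Finset.univ : Finset (Fin m)) ≠ ∅ :=
    Finset.ne_empty_of_mem (Finset.mem_univ (⟨0, hm⟩ : Fin m))
  have h0 : ∑ a ∈ parityPred m b, chiR T a
      = ∑ a : Fin m → Bool, (if parity Finset.univ a = b then (1:ℝ) else 0) * chiR T a := by
    rw [parityPred, Finset.sum_filter]
    exact Finset.sum_congr rfl fun a _ => by split <;> simp
  rw [h0]
  have h1 : ∀ a : Fin m → Bool, (if parity Finset.univ a = b then (1:ℝ) else 0) * chiR T a
      = (chiR ∅ a * chiR T a + sgn b * (chiR Finset.univ a * chiR T a)) / 2 := by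
    intro a
    rw [indparity]
    have : chiR (∅ : Finset (Fin m)) a = 1 := Finset.prod_empty
    rw [this]
    ring
  rw [Finset.sum_congr rfl fun a _ => h1 a]
  have h2 : ∑ a : Fin m → Bool,
      (chiR ∅ a * chiR T a + sgn b * (chiR Finset.univ a * chiR T a)) / 2
      = ((if (∅ : Finset (Fin m)) = T then (2:ℝ)^m else 0)
          + sgn b * (if (Finset.univ : Finset (Fin m)) = T then (2:ℝ)^m else 0)) / 2 := by
    rw [← Finset.sum_div, Finset.sum_add_distrib, ← Finset.mul_sum, orth, orth]
  rw [h2]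
  by_cases hT : T = ∅
  · subst hT
    rw [if_pos rfl, if_pos rfl, if_neg huniv]
    ring
  · rw [if_neg (fun hh => hT hh.symm), if_neg hT]
    by_cases hTu : T = Finset.univ
    · rw [if_pos hTu.symm, if_pos hTu]
      ring
    · rw [if_neg (fun hh => hTu hh.symm), if_neg hTu]
      ring


lemma card_pred {m : ℕ} (hm : 0 < m) (b : Bool) :
    ((parityPred m b).card : ℝ) = (2:ℝ)^m / 2 := by
  have h := predsum hm b ∅
  rw [if_pos rfl] at h
  rw [← h]
  have : ∀ a ∈ parityPred m b, chiR (∅ : Finset (Fin m)) a = 1 :=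
    fun a _ => Finset.prod_empty
  rw [Finset.sum_congr rfl this, Finset.sum_const, nsmul_eq_mul, mul_one]

lemma card_pred_ne {m : ℕ} (hm : 0 < m) (b : Bool) :
    ((parityPred m b).card : ℝ) ≠ 0 := by
  rw [card_pred hm b]
  positivity

def nu (m : ℕ) (b : Bool) (T : Finset (Fin m)) : ℝ :=
  ∑ a : Fin m → Bool, unifParity m b a * chiR T a

lemma nu_eq {m : ℕ} (hm : 0 < m) (b : Bool) (T : Finset (Fin m)) :
    nu m b T = if T = ∅ then 1 else if T = Finset.univ then sgn b else 0 := by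
  have hc := card_pred hm b
  have hc0 : ((parityPred m b).card : ℝ) ≠ 0 := card_pred_ne hm b
  have h0 : nu m b T = ((parityPred m b).card : ℝ)⁻¹ * ∑ a ∈ parityPred m b, chiR T a := by
    rw [nu, Finset.mul_sum, parityPred, Finset.sum_filter]
    refine Finset.sum_congr rfl fun a _ => ?_
    rw [unifParity]
    by_cases hp : a ∈ parityPred m b
    · rw [if_pos hp]
      have : parity Finset.univ a = b := by
        rw [parityPred, Finset.mem_filter] at hp; exact hp.2
      rw [if_pos this]
      rfl
    · rw [if_neg hp, zero_mul]
      have : ¬ parity Finset.univ a = b := by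
        intro hh; exact hp (by rw [parityPred, Finset.mem_filter]; exact ⟨Finset.mem_univ a, hh⟩)
      rw [if_neg this]
  rw [h0, predsum hm b T, hc]
  have h2 : ((2:ℝ)^m / 2) ≠ 0 := by positivity
  by_cases hT : T = ∅
  · rw [if_pos hT, if_pos hT]
    field_simp
  · rw [if_neg hT, if_neg hT]
    by_cases hTu : T = Finset.univ
    · rw [if_pos hTu, if_pos hTu]
      field_simp
    · rw [if_neg hTu, if_neg hTu]
      ring

lemma nu_empty {m : ℕ} (hm : 0 < m) (b : Bool) : nu m b ∅ = 1 := by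
  rw [nu_eq hm b, if_pos rfl]

lemma nu_zero {m : ℕ} (hm : 0 < m) (b : Bool) (T : Finset (Fin m))
    (h1 : T ≠ ∅) (h2 : T ≠ Finset.univ) : nu m b T = 0 := by
  rw [nu_eq hm b, if_neg h1, if_neg h2]

lemma abs_nu_le_one {m : ℕ} (hm : 0 < m) (b : Bool) (T : Finset (Fin m)) :
    |nu m b T| ≤ 1 := by
  rw [nu_eq hm b]
  split
  · simp
  · split
    · rw [abs_sgn]
    · simp


def colSet {m n : ℕ} (σ : Fin m → Finset (Fin n)) (i : Fin n) : Finset (Fin m) :=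
  Finset.univ.filter fun j => i ∈ σ j

lemma Phi {m n : ℕ} (b : Bool) (σ : Fin m → Finset (Fin n)) :
    ∑ x : Fin n → (Fin m → Bool),
      (∏ i, unifParity m b (x i)) * (∏ j, chiR (σ j) fun i => x i j)
      = ∏ i, nu m b (colSet σ i) := by
  have hx : ∀ x : Fin n → (Fin m → Bool),
      (∏ i, unifParity m b (x i)) * (∏ j, chiR (σ j) fun i => x i j)
      = ∏ i, (unifParity m b (x i) * ∏ j ∈ colSet σ i, sgn (x i j)) := by
    intro x
    rw [Finset.prod_mul_distrib]
    congr 1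
    have hswap : (∏ j, chiR (σ j) fun i => x i j) = ∏ j, ∏ i ∈ σ j, sgn (x i j) := rfl
    rw [hswap]
    exact Finset.prod_comm' (by intro j i; simp [colSet])
  rw [Finset.sum_congr rfl fun x _ => hx x]
  rw [sum_pi_prod (fun i a => unifParity m b a * ∏ j ∈ colSet σ i, sgn (a j))]
  rfl

lemma ind_eq {m : ℕ} (b : Bool) (t : Fin m → Bool) :
    (if t ∈ parityPred m b then (1:ℝ) else 0) = (1 + sgn b * ∏ j, sgn (t j)) / 2 := by
  have h : (∏ j, sgn (t j)) = chiR Finset.univ t := rfl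
  rw [h]
  rw [← indparity b t]
  by_cases hp : parity Finset.univ t = b
  · rw [if_pos hp, if_pos (by simp [parityPred, hp])]
  · rw [if_neg hp, if_neg (by simp [parityPred, hp])]

lemma sum_w_one {m n : ℕ} (hm : 0 < m) (b : Bool) :
    ∑ x : Fin n → (Fin m → Bool), (∏ i, unifParity m b (x i)) = 1 := by
  rw [sum_pi_prod (fun _ a => unifParity m b a)]
  have : ∀ i : Fin n, (∑ a : Fin m → Bool, unifParity m b a) = 1 := by
    intro i
    have h := nu_empty hm b
    rw [nu] at h
    rw [← h]
    exact Finset.sum_congr rfl fun a _ => by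
      rw [show chiR (∅ : Finset (Fin m)) a = 1 from Finset.prod_empty, mul_one]
  rw [Finset.prod_congr rfl fun i _ => this i, Finset.prod_const_one]

lemma identity {m n : ℕ} (hm : 0 < m) (b : Bool) (g : Fin m → (Fin n → Bool) → Bool) :
    polyProb (unifParity m b) (parityPred m b) g
      = 1/2 + sgn b/2 * ∑ σ : Fin m → Finset (Fin n),
          (∏ j, fc (sg (g j)) (σ j)) * ∏ i, nu m b (colSet σ i) := by
  have hEf : ∑ x : Fin n → (Fin m → Bool),
      (∏ i, unifParity m b (x i)) * ∏ j, sgn (g j fun i => x i j)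
      = ∑ σ : Fin m → Finset (Fin n),
          (∏ j, fc (sg (g j)) (σ j)) * ∏ i, nu m b (colSet σ i) := by
    have h1 : ∀ x : Fin n → (Fin m → Bool), (∏ j, sgn (g j fun i => x i j))
        = ∑ σ : Fin m → Finset (Fin n),
            (∏ j, fc (sg (g j)) (σ j)) * (∏ j, chiR (σ j) fun i => x i j) := by
      intro x
      have h2 : ∀ j : Fin m, sgn (g j fun i => x i j)
          = ∑ S ∈ (Finset.univ : Finset (Finset (Fin n))),
              fc (sg (g j)) S * chiR S (fun i => x i j) :=
        fun j => (inversion (sg (g j)) (fun i => x i j)).symm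
      rw [Finset.prod_congr rfl fun j _ => h2 j]
      rw [Finset.prod_univ_sum]
      rw [Fintype.piFinset_univ]
      exact Finset.sum_congr rfl fun σ _ => Finset.prod_mul_distrib
    have h3 : ∀ x : Fin n → (Fin m → Bool),
        (∏ i, unifParity m b (x i)) * ∏ j, sgn (g j fun i => x i j)
        = ∑ σ : Fin m → Finset (Fin n),
            (∏ j, fc (sg (g j)) (σ j)) *
              ((∏ i, unifParity m b (x i)) * (∏ j, chiR (σ j) fun i => x i j)) := by
      intro x
      rw [h1 x, Finset.mul_sum]
      exact Finset.sum_congr rfl fun σ _ => by ring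
    rw [Finset.sum_congr rfl fun x _ => h3 x, Finset.sum_comm]
    refine Finset.sum_congr rfl fun σ _ => ?_
    rw [← Finset.mul_sum, Phi b σ]
  have hpt : ∀ x : Fin n → (Fin m → Bool),
      (∏ i, unifParity m b (x i)) *
        (if (fun j => g j fun i => x i j) ∈ parityPred m b then (1:ℝ) else 0)
      = (∏ i, unifParity m b (x i)) * (1/2)
        + (sgn b/2) * ((∏ i, unifParity m b (x i)) * ∏ j, sgn (g j fun i => x i j)) := by
    intro x
    rw [ind_eq b]
    ring
  rw [polyProb, Finset.sum_congr rfl fun x _ => hpt x, Finset.sum_add_distrib,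
    ← Finset.sum_mul, ← Finset.mul_sum, sum_w_one hm b, hEf]
  ring


lemma rowExp {m n : ℕ} (hm : 2 ≤ m) (b : Bool) (j : Fin m) (G : (Fin n → Bool) → ℝ) :
    ∑ x : Fin n → (Fin m → Bool), (∏ i, unifParity m b (x i)) * G (fun i => x i j)
      = ((2:ℝ)^n)⁻¹ * ∑ y : Fin n → Bool, G y := by
  have hm0 : 0 < m := by omega
  have h1 : ∀ x : Fin n → (Fin m → Bool),
      (∏ i, unifParity m b (x i)) * G (fun i => x i j)
      = ∑ S : Finset (Fin n), fc G S *
          ((∏ i, unifParity m b (x i)) *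
            (∏ k, chiR (if k = j then S else ∅) fun i => x i k)) := by
    intro x
    have hG : G (fun i => x i j)
        = ∑ S : Finset (Fin n), fc G S * chiR S (fun i => x i j) :=
      (inversion G (fun i => x i j)).symm
    have hch : ∀ S : Finset (Fin n),
        (∏ k, chiR (if k = j then S else ∅) fun i => x i k) = chiR S (fun i => x i j) := by
      intro S
      have hps : (∏ k, chiR (if k = j then S else ∅) fun i => x i k)
          = chiR (if j = j then S else ∅) (fun i => x i j) :=
        Finset.prod_eq_single j
          (fun k _ hk => by rw [if_neg hk]; exact Finset.prod_empty)
          (fun h => absurd (Finset.mem_univ j) h)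
      rw [hps, if_pos rfl]
    rw [hG, Finset.mul_sum]
    exact Finset.sum_congr rfl fun S _ => by rw [hch S]; ring
  rw [Finset.sum_congr rfl fun x _ => h1 x, Finset.sum_comm]
  have h2 : ∀ S : Finset (Fin n),
      ∑ x : Fin n → (Fin m → Bool), fc G S *
          ((∏ i, unifParity m b (x i)) *
            (∏ k, chiR (if k = j then S else ∅) fun i => x i k))
      = fc G S * (if S = ∅ then 1 else 0) := by
    intro S
    rw [← Finset.mul_sum, Phi b (fun k => if k = j then S else ∅)]
    congr 1
    have hcol : ∀ i : Fin n, colSet (fun k => if k = j then S else ∅) i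
        = if i ∈ S then {j} else (∅ : Finset (Fin m)) := by
      intro i
      by_cases hiS : i ∈ S
      · rw [if_pos hiS]
        ext k
        by_cases hk : k = j <;> simp [colSet, hk, hiS]
      · rw [if_neg hiS]
        ext k
        by_cases hk : k = j <;> simp [colSet, hk, hiS]
    rw [Finset.prod_congr rfl fun i _ => by rw [hcol i]]
    have hsingle : nu m b ({j} : Finset (Fin m)) = 0 := by
      refine nu_zero hm0 b _ (Finset.singleton_ne_empty j) ?_
      intro hh
      have : (({j} : Finset (Fin m)).card) = (Finset.univ : Finset (Fin m)).card := by rw [hh]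
      rw [Finset.card_singleton, Finset.card_univ, Fintype.card_fin] at this
      omega
    by_cases hS : S = ∅
    · subst hS
      rw [if_pos rfl]
      have : ∀ i : Fin n, (if i ∈ (∅ : Finset (Fin n)) then ({j} : Finset (Fin m)) else ∅) = ∅ :=
        fun i => by simp
      rw [Finset.prod_congr rfl fun i _ => by rw [this i, nu_empty hm0 b]]
      exact Finset.prod_const_one
    · rw [if_neg hS]
      obtain ⟨i, hi⟩ := Finset.nonempty_iff_ne_empty.mpr hS
      refine Finset.prod_eq_zero (Finset.mem_univ i) ?_
      rw [if_pos hi]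
      exact hsingle
  rw [Finset.sum_congr rfl fun S _ => h2 S]
  have h3 : ∀ S : Finset (Fin n), fc G S * (if S = ∅ then (1:ℝ) else 0)
      = if S = ∅ then fc G S else 0 := fun S => by split <;> simp
  rw [Finset.sum_congr rfl fun S _ => h3 S, Finset.sum_ite_eq' Finset.univ ∅ (fc G),
    if_pos (Finset.mem_univ _), fc]
  congr 1
  exact Finset.sum_congr rfl fun y _ => by
    rw [show chiR (∅ : Finset (Fin n)) y = 1 from Finset.prod_empty, mul_one]

lemma dist_eq {n : ℕ} (g : (Fin n → Bool) → Bool) (S : Finset (Fin n)) (b' : Bool) :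
    ∑ y : Fin n → Bool, ((2:ℝ)^n)⁻¹ * (if g y ≠ chi S b' y then 1 else 0)
      = (1 - sgn b' * fc (sg g) S) / 2 := by
  have h2n : ((2:ℝ)^n) ≠ 0 := by positivity
  have hpt : ∀ y : Fin n → Bool, (if g y ≠ chi S b' y then (1:ℝ) else 0)
      = (1 - sg g y * (sgn b' * chiR S y)) / 2 := by
    intro y
    rw [show sgn b' * chiR S y = sg (chi S b') y from (sg_chi S b' y).symm]
    by_cases h : g y = chi S b' y
    · rw [if_neg (by simpa using h), sg, sg, h, sgn_mul_self]
      norm_num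
    · rw [if_pos (by simpa using h)]
      rcases Bool.eq_not_of_ne h with hgy
      rw [sg, sg, hgy]
      cases chi S b' y <;> simp [sgn] <;> norm_num
  rw [Finset.sum_congr rfl fun y _ => by rw [hpt y]]
  have hsplit : ∀ y : Fin n → Bool, ((2:ℝ)^n)⁻¹ * ((1 - sg g y * (sgn b' * chiR S y)) / 2)
      = ((2:ℝ)^n)⁻¹ * 1 / 2 - (sgn b'/2) * (((2:ℝ)^n)⁻¹ * (sg g y * chiR S y)) :=
    fun y => by ring
  rw [Finset.sum_congr rfl fun y _ => hsplit y, Finset.sum_sub_distrib, ← Finset.mul_sum,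
    ← Finset.mul_sum]
  rw [show (((2:ℝ)^n)⁻¹ * ∑ y : Fin n → Bool, sg g y * chiR S y) = fc (sg g) S from rfl]
  rw [Finset.sum_const, Finset.card_univ, nsmul_eq_mul]
  have hcardfun : (Fintype.card (Fin n → Bool) : ℝ) = (2:ℝ)^n := by simp [Fintype.card_fun]
  rw [hcardfun]
  field_simp


lemma sum_const_sigma {m n : ℕ} (hm0 : 0 < m) (t : (Fin m → Finset (Fin n)) → ℝ)
    (ht : ∀ σ, (∀ S : Finset (Fin n), σ ≠ fun _ => S) → t σ = 0) :
    ∑ σ : Fin m → Finset (Fin n), t σ = ∑ S : Finset (Fin n), t (fun _ => S) := by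
  classical
  have hinj : ∀ S ∈ (Finset.univ : Finset (Finset (Fin n))), ∀ S' ∈ Finset.univ,
      (fun _ : Fin m => S) = (fun _ => S') → S = S' :=
    fun S _ S' _ h => congrFun h ⟨0, hm0⟩
  rw [← Finset.sum_image (f := t) (g := fun S : Finset (Fin n) => (fun _ : Fin m => S)) hinj]
  refine (Finset.sum_subset (Finset.subset_univ _) ?_).symm
  intro σ _ hσ
  exact ht σ fun S hS => hσ (Finset.mem_image.mpr ⟨S, Finset.mem_univ S, hS.symm⟩)

lemma colset_ne {m n : ℕ} (σ : Fin m → Finset (Fin n)) (i : Fin n) {j k : Fin m}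
    (hj : i ∈ σ j) (hk : i ∉ σ k) :
    colSet σ i ≠ ∅ ∧ colSet σ i ≠ Finset.univ := by
  constructor
  · exact Finset.ne_empty_of_mem (Finset.mem_filter.mpr ⟨Finset.mem_univ j, hj⟩)
  · intro hu
    have : k ∈ colSet σ i := hu ▸ Finset.mem_univ k
    exact hk (Finset.mem_filter.mp this).2

lemma nuprod_zero {m n : ℕ} (hm0 : 0 < m) (b : Bool) (σ : Fin m → Finset (Fin n))
    (h : ∀ S : Finset (Fin n), σ ≠ fun _ => S) :
    ∏ i, nu m b (colSet σ i) = 0 := by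
  have hj0 : (⟨0, hm0⟩ : Fin m) = ⟨0, hm0⟩ := rfl
  obtain ⟨j, hj⟩ : ∃ j, σ j ≠ σ (⟨0, hm0⟩ : Fin m) := by
    by_contra hc
    push_neg at hc
    exact h (σ ⟨0, hm0⟩) (funext hc)
  obtain ⟨i, hi⟩ : ∃ i, ¬(i ∈ σ j ↔ i ∈ σ (⟨0, hm0⟩ : Fin m)) := by
    by_contra hc
    push_neg at hc
    exact hj (Finset.ext fun i => hc i)
  refine Finset.prod_eq_zero (Finset.mem_univ i) ?_
  by_cases h1 : i ∈ σ j
  · have h2 : i ∉ σ (⟨0, hm0⟩ : Fin m) := fun hh => hi ⟨fun _ => hh, fun _ => h1⟩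
    obtain ⟨hne, hnu⟩ := colset_ne σ i h1 h2
    exact nu_zero hm0 b _ hne hnu
  · have h2 : i ∈ σ (⟨0, hm0⟩ : Fin m) := by
      by_contra h3
      exact hi ⟨fun h4 => absurd h4 h1, fun h4 => absurd h4 h3⟩
    obtain ⟨hne, hnu⟩ := colset_ne σ i h2 h1
    exact nu_zero hm0 b _ hne hnu

end LT


set_option maxHeartbeats 2000000 in
open LT in
/-- **Linearity testing for the uniform distribution.** -/
theorem linearity_testing_uniform
    (m : ℕ) (hm : 3 ≤ m) (b : Bool)
    (δ : ℝ) (hδ0 : 0 < δ) (hδ : δ < 1 / (2 * (m + 1)))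
    (n : ℕ) (f : Fin m → (Fin n → Bool) → Bool)
    (happ : 1 - δ ≤ polyProb (unifParity m b) (parityPred m b) f) :
    ∃ (S : Finset (Fin n)) (bs : Fin m → Bool),
      (∀ j, ∑ x : Fin n → Bool, ((2 : ℝ) ^ n)⁻¹ *
        (if f j x ≠ chi S (bs j) x then 1 else 0) ≤ δ) ∧
      IsGenPoly (parityPred m b) (fun j => chi S (bs j)) := by
  classical
  have hm0 : 0 < m := by omega
  have hm2 : 2 ≤ m := by omega
  have hδm : ((m:ℝ)+1)*δ < 1/2 := by
    have h2m : (0:ℝ) < 2*((m:ℝ)+1) := by positivity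
    have h1 : δ * (2*((m:ℝ)+1)) < 1 := by
      calc δ * (2*((m:ℝ)+1)) < (1 / (2 * ((m:ℝ) + 1))) * (2*((m:ℝ)+1)) := by
            apply mul_lt_mul_of_pos_right hδ h2m
        _ = 1 := by field_simp
    nlinarith
  -- Step A: Fourier identity for f
  have hidf := identity hm0 b f (n := n)
  set Ef := ∑ σ : Fin m → Finset (Fin n),
      (∏ j, fc (sg (f j)) (σ j)) * ∏ i, nu m b (colSet σ i) with hEfdef
  have hsE : 1 - 2*δ ≤ sgn b * Ef := by
    have happ' := happ
    rw [hidf] at happ'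
    nlinarith [happ']
  have hcol : Ef = ∑ S : Finset (Fin n),
      (∏ j, fc (sg (f j)) S) * ∏ i, nu m b (colSet (fun _ => S) i) := by
    rw [hEfdef]
    exact sum_const_sigma hm0 _ (fun σ hσ => by rw [nuprod_zero hm0 b σ hσ, mul_zero])
  have habs : 1 - 2*δ ≤ ∑ S : Finset (Fin n), ∏ j, |fc (sg (f j)) S| := by
    have h1 : sgn b * Ef ≤ |Ef| := by
      calc sgn b * Ef ≤ |sgn b * Ef| := le_abs_self _
        _ = |sgn b| * |Ef| := abs_mul _ _
        _ = |Ef| := by rw [abs_sgn, one_mul]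
    have h2 : |Ef| ≤ ∑ S : Finset (Fin n), ∏ j, |fc (sg (f j)) S| := by
      rw [hcol]
      refine le_trans (Finset.abs_sum_le_sum_abs _ _) ?_
      refine Finset.sum_le_sum fun S _ => ?_
      rw [abs_mul, Finset.abs_prod]
      have hb : |∏ i, nu m b (colSet (fun _ : Fin m => S) i)| ≤ 1 := by
        rw [Finset.abs_prod]
        exact Finset.prod_le_one (fun i _ => abs_nonneg _) (fun i _ => abs_nu_le_one hm0 b _)
      calc (∏ j, |fc (sg (f j)) S|) * |∏ i, nu m b (colSet (fun _ : Fin m => S) i)|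
          ≤ (∏ j, |fc (sg (f j)) S|) * 1 := by
            apply mul_le_mul_of_nonneg_left hb
            exact Finset.prod_nonneg fun j _ => abs_nonneg _
        _ = ∏ j, |fc (sg (f j)) S| := mul_one _
    linarith
  -- Step B: for each j there is a large Fourier coefficient
  have hkey : ∀ j : Fin m, ∃ S : Finset (Fin n), 1 - 2*δ ≤ |fc (sg (f j)) S| := by
    intro j
    obtain ⟨S0, _, hS0⟩ := Finset.exists_max_image (Finset.univ : Finset (Finset (Fin n)))
      (fun T => |fc (sg (f j)) T|) ⟨∅, Finset.mem_univ ∅⟩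
    refine ⟨S0, ?_⟩
    have hcard : 1 < (Finset.univ.erase j).card := by
      rw [Finset.card_erase_of_mem (Finset.mem_univ j), Finset.card_univ, Fintype.card_fin]
      omega
    obtain ⟨k1, hk1, k2, hk2, hk12⟩ := Finset.one_lt_card.mp hcard
    have hk1j : k1 ≠ j := Finset.ne_of_mem_erase hk1
    have hk2j : k2 ≠ j := Finset.ne_of_mem_erase hk2
    have hb1 : ∀ S : Finset (Fin n), ∏ jj, |fc (sg (f jj)) S|
        ≤ |fc (sg (f j)) S0| * (|fc (sg (f k1)) S| * |fc (sg (f k2)) S|) := by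
      intro S
      have hsub : ({j, k1, k2} : Finset (Fin m)) ⊆ Finset.univ := Finset.subset_univ _
      have hjmem : j ∉ ({k1, k2} : Finset (Fin m)) := by
        simp only [Finset.mem_insert, Finset.mem_singleton]
        push_neg
        exact ⟨fun hh => hk1j hh.symm, fun hh => hk2j hh.symm⟩
      have hk1mem : k1 ∉ ({k2} : Finset (Fin m)) := by
        simp only [Finset.mem_singleton]
        exact hk12
      have hprod3 : ∏ jj ∈ ({j, k1, k2} : Finset (Fin m)), |fc (sg (f jj)) S|
          = |fc (sg (f j)) S| * (|fc (sg (f k1)) S| * |fc (sg (f k2)) S|) := by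
        rw [Finset.prod_insert hjmem, Finset.prod_insert hk1mem, Finset.prod_singleton]
      have hsd := Finset.prod_sdiff (f := fun jj => |fc (sg (f jj)) S|) hsub
      have hle1 : ∏ jj ∈ Finset.univ \ ({j, k1, k2} : Finset (Fin m)), |fc (sg (f jj)) S| ≤ 1 :=
        Finset.prod_le_one (fun jj _ => abs_nonneg _) (fun jj _ => abs_fc_le_one (f jj) S)
      have h3nn : (0:ℝ) ≤ ∏ jj ∈ ({j, k1, k2} : Finset (Fin m)), |fc (sg (f jj)) S| :=
        Finset.prod_nonneg fun jj _ => abs_nonneg _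
      calc ∏ jj, |fc (sg (f jj)) S|
          = (∏ jj ∈ Finset.univ \ ({j, k1, k2} : Finset (Fin m)), |fc (sg (f jj)) S|)
            * ∏ jj ∈ ({j, k1, k2} : Finset (Fin m)), |fc (sg (f jj)) S| := hsd.symm
        _ ≤ 1 * ∏ jj ∈ ({j, k1, k2} : Finset (Fin m)), |fc (sg (f jj)) S| :=
            mul_le_mul_of_nonneg_right hle1 h3nn
        _ = |fc (sg (f j)) S| * (|fc (sg (f k1)) S| * |fc (sg (f k2)) S|) := by
            rw [one_mul, hprod3]
        _ ≤ |fc (sg (f j)) S0| * (|fc (sg (f k1)) S| * |fc (sg (f k2)) S|) := by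
            apply mul_le_mul_of_nonneg_right (hS0 S (Finset.mem_univ S))
            positivity
    have hcs : ∑ S : Finset (Fin n), |fc (sg (f k1)) S| * |fc (sg (f k2)) S| ≤ 1 := by
      have h := Finset.sum_mul_sq_le_sq_mul_sq Finset.univ
        (fun S => |fc (sg (f k1)) S|) (fun S => |fc (sg (f k2)) S|)
      have e1 : ∑ S : Finset (Fin n), |fc (sg (f k1)) S|^2 = 1 := by
        have : ∀ S : Finset (Fin n), |fc (sg (f k1)) S|^2 = (fc (sg (f k1)) S)^2 :=
          fun S => sq_abs _
        rw [Finset.sum_congr rfl fun S _ => this S]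
        exact parseval (f k1)
      have e2 : ∑ S : Finset (Fin n), |fc (sg (f k2)) S|^2 = 1 := by
        have : ∀ S : Finset (Fin n), |fc (sg (f k2)) S|^2 = (fc (sg (f k2)) S)^2 :=
          fun S => sq_abs _
        rw [Finset.sum_congr rfl fun S _ => this S]
        exact parseval (f k2)
      rw [e1, e2, one_mul] at h
      have hnn : (0:ℝ) ≤ ∑ S : Finset (Fin n), |fc (sg (f k1)) S| * |fc (sg (f k2)) S| :=
        Finset.sum_nonneg fun S _ => mul_nonneg (abs_nonneg _) (abs_nonneg _)
      nlinarith
    have hchain : 1 - 2*δ ≤ |fc (sg (f j)) S0| * 1 := by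
      calc 1 - 2*δ ≤ ∑ S : Finset (Fin n), ∏ jj, |fc (sg (f jj)) S| := habs
        _ ≤ ∑ S : Finset (Fin n),
              |fc (sg (f j)) S0| * (|fc (sg (f k1)) S| * |fc (sg (f k2)) S|) :=
            Finset.sum_le_sum fun S _ => hb1 S
        _ = |fc (sg (f j)) S0| *
              ∑ S : Finset (Fin n), |fc (sg (f k1)) S| * |fc (sg (f k2)) S| := by
            rw [Finset.mul_sum]
        _ ≤ |fc (sg (f j)) S0| * 1 := by
            apply mul_le_mul_of_nonneg_left hcs (abs_nonneg _)
    rwa [mul_one] at hchain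
  choose Sj hSj using hkey
  set bsel : Fin m → Bool := fun j => decide (fc (sg (f j)) (Sj j) < 0) with hbseldef
  have hsgnfc : ∀ j, sgn (bsel j) * fc (sg (f j)) (Sj j) = |fc (sg (f j)) (Sj j)| := by
    intro j
    by_cases hneg : fc (sg (f j)) (Sj j) < 0
    · have hb : bsel j = true := by rw [hbseldef]; simp [hneg]
      rw [hb, abs_of_neg hneg]
      simp [sgn]
    · have hb : bsel j = false := by rw [hbseldef]; simp [hneg]
      rw [hb, abs_of_nonneg (not_lt.mp hneg)]
      simp [sgn]
  have hdistj : ∀ j, ∑ y : Fin n → Bool, ((2:ℝ)^n)⁻¹ *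
      (if f j y ≠ chi (Sj j) (bsel j) y then 1 else 0) ≤ δ := by
    intro j
    rw [dist_eq, hsgnfc j]
    have := hSj j
    linarith
  set g : Fin m → (Fin n → Bool) → Bool := fun j => chi (Sj j) (bsel j) with hgdef
  -- union bound
  have hW0 : ∀ x : Fin n → (Fin m → Bool), 0 ≤ ∏ i, unifParity m b (x i) := by
    intro x
    refine Finset.prod_nonneg fun i _ => ?_
    rw [unifParity]
    split
    · positivity
    · exact le_refl 0
  have hgprob : 1 - ((m:ℝ)+1)*δ ≤ polyProb (unifParity m b) (parityPred m b) g := by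
    have hpt : ∀ x : Fin n → (Fin m → Bool),
        (if (fun j => f j fun i => x i j) ∈ parityPred m b then (1:ℝ) else 0)
          - (∑ j, (if f j (fun i => x i j) ≠ g j (fun i => x i j) then (1:ℝ) else 0))
        ≤ (if (fun j => g j fun i => x i j) ∈ parityPred m b then (1:ℝ) else 0) := by
      intro x
      by_cases hall : ∀ j, f j (fun i => x i j) = g j (fun i => x i j)
      · have heq : (fun j => f j fun i => x i j) = (fun j => g j fun i => x i j) :=
          funext hall
        rw [heq]
        have hs0 : (0:ℝ) ≤ ∑ j, (if f j (fun i => x i j) ≠ g j (fun i => x i j)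
            then (1:ℝ) else 0) :=
          Finset.sum_nonneg fun j _ => by split <;> norm_num
        linarith
      · push_neg at hall
        obtain ⟨j0, hj0⟩ := hall
        have h1 : (1:ℝ) ≤ ∑ j, (if f j (fun i => x i j) ≠ g j (fun i => x i j)
            then (1:ℝ) else 0) := by
          have := Finset.single_le_sum
            (f := fun j => (if f j (fun i => x i j) ≠ g j (fun i => x i j) then (1:ℝ) else 0))
            (fun j _ => by split <;> norm_num) (Finset.mem_univ j0)
          rwa [if_pos hj0] at this
        have h2 : (if (fun j => f j fun i => x i j) ∈ parityPred m b then (1:ℝ) else 0) ≤ 1 := by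
          split <;> norm_num
        have h3 : (0:ℝ) ≤ if (fun j => g j fun i => x i j) ∈ parityPred m b then (1:ℝ) else 0 := by
          split <;> norm_num
        linarith
    have hstep : polyProb (unifParity m b) (parityPred m b) f
        - ∑ j, (∑ x : Fin n → (Fin m → Bool), (∏ i, unifParity m b (x i)) *
            (if f j (fun i => x i j) ≠ g j (fun i => x i j) then (1:ℝ) else 0))
        ≤ polyProb (unifParity m b) (parityPred m b) g := by
      have h1 : ∀ x : Fin n → (Fin m → Bool),
          (∏ i, unifParity m b (x i)) *
            (if (fun j => f j fun i => x i j) ∈ parityPred m b then (1:ℝ) else 0)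
          - (∑ j, (∏ i, unifParity m b (x i)) *
              (if f j (fun i => x i j) ≠ g j (fun i => x i j) then (1:ℝ) else 0))
          ≤ (∏ i, unifParity m b (x i)) *
            (if (fun j => g j fun i => x i j) ∈ parityPred m b then (1:ℝ) else 0) := by
        intro x
        have h2 := mul_le_mul_of_nonneg_left (hpt x) (hW0 x)
        calc (∏ i, unifParity m b (x i)) *
              (if (fun j => f j fun i => x i j) ∈ parityPred m b then (1:ℝ) else 0)
            - (∑ j, (∏ i, unifParity m b (x i)) *
                (if f j (fun i => x i j) ≠ g j (fun i => x i j) then (1:ℝ) else 0))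
            = (∏ i, unifParity m b (x i)) *
              ((if (fun j => f j fun i => x i j) ∈ parityPred m b then (1:ℝ) else 0)
                - (∑ j, (if f j (fun i => x i j) ≠ g j (fun i => x i j) then (1:ℝ) else 0))) := by
              rw [mul_sub, Finset.mul_sum]
          _ ≤ (∏ i, unifParity m b (x i)) *
              (if (fun j => g j fun i => x i j) ∈ parityPred m b then (1:ℝ) else 0) := h2
      have h3 := Finset.sum_le_sum (fun x (_ : x ∈ (Finset.univ : Finset (Fin n → (Fin m → Bool)))) => h1 x)
      rw [Finset.sum_sub_distrib] at h3
      rw [Finset.sum_comm] at h3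
      exact h3
    have hDle : ∀ j : Fin m, (∑ x : Fin n → (Fin m → Bool), (∏ i, unifParity m b (x i)) *
        (if f j (fun i => x i j) ≠ g j (fun i => x i j) then (1:ℝ) else 0)) ≤ δ := by
      intro j
      have hre := rowExp hm2 b j
        (fun y => if f j y ≠ g j y then (1:ℝ) else 0) (n := n)
      rw [hre]
      have := hdistj j
      rw [Finset.mul_sum]
      exact this
    have hsum : ∑ j : Fin m, (∑ x : Fin n → (Fin m → Bool), (∏ i, unifParity m b (x i)) *
        (if f j (fun i => x i j) ≠ g j (fun i => x i j) then (1:ℝ) else 0)) ≤ (m:ℝ) * δ := by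
      calc ∑ j : Fin m, (∑ x : Fin n → (Fin m → Bool), (∏ i, unifParity m b (x i)) *
            (if f j (fun i => x i j) ≠ g j (fun i => x i j) then (1:ℝ) else 0))
          ≤ ∑ _j : Fin m, δ := Finset.sum_le_sum fun j _ => hDle j
        _ = (m:ℝ) * δ := by rw [Finset.sum_const, Finset.card_univ, Fintype.card_fin,
              nsmul_eq_mul]
    have hcast : 1 - ((m:ℝ)+1)*δ = (1 - δ) - (m:ℝ)*δ := by ring
    linarith
  -- Step C: identity for g and rigidity
  have hidg := identity hm0 b g (n := n)
  set Eg := ∑ σ : Fin m → Finset (Fin n),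
      (∏ j, fc (sg (g j)) (σ j)) * ∏ i, nu m b (colSet σ i) with hEgdef
  have hfcg : ∀ (j : Fin m) (T : Finset (Fin n)),
      fc (sg (g j)) T = if T = Sj j then sgn (bsel j) else 0 := by
    intro j T
    rw [hgdef]
    exact fc_chi (Sj j) T (bsel j)
  have hEg : Eg = (∏ j, sgn (bsel j)) * ∏ i, nu m b (colSet Sj i) := by
    rw [hEgdef]
    rw [Finset.sum_eq_single Sj]
    · congr 1
      refine Finset.prod_congr rfl fun j _ => ?_
      rw [hfcg j (Sj j), if_pos rfl]
    · intro σ _ hσ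
      obtain ⟨j, hj⟩ : ∃ j, σ j ≠ Sj j := by
        by_contra hc
        push_neg at hc
        exact hσ (funext hc)
      have hz : fc (sg (g j)) (σ j) = 0 := by rw [hfcg j (σ j), if_neg hj]
      rw [Finset.prod_eq_zero (Finset.mem_univ j) hz, zero_mul]
    · intro h
      exact absurd (Finset.mem_univ Sj) h
  have hhalf : 1/2 < polyProb (unifParity m b) (parityPred m b) g := by linarith
  have hEgpos : 0 < sgn b * Eg := by
    rw [hidg] at hhalf
    nlinarith
  have hconst : ∀ j, Sj j = Sj (⟨0, hm0⟩ : Fin m) := by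
    by_contra hc
    push_neg at hc
    obtain ⟨j, hj⟩ := hc
    have hne : ∀ S : Finset (Fin n), Sj ≠ fun _ => S := by
      intro S hS
      apply hj
      rw [congrFun hS j, congrFun hS (⟨0, hm0⟩ : Fin m)]
    have hz := nuprod_zero hm0 b Sj hne
    rw [hz, mul_zero] at hEg
    rw [hEg, mul_zero] at hEgpos
    exact lt_irrefl 0 hEgpos
  have hnu1 : ∀ i : Fin n, colSet Sj i = ∅ ∨ colSet Sj i = Finset.univ := by
    intro i
    by_cases hiS : i ∈ Sj (⟨0, hm0⟩ : Fin m)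
    · right
      ext k
      simp only [colSet, Finset.mem_filter, Finset.mem_univ, true_and, iff_true]
      rw [hconst k]
      exact hiS
    · left
      ext k
      simp only [colSet, Finset.mem_filter, Finset.mem_univ, true_and,
        Finset.notMem_empty, iff_false]
      rw [hconst k]
      exact hiS
  have habsEg : |Eg| = 1 := by
    rw [hEg, abs_mul, Finset.abs_prod, Finset.abs_prod]
    have h1 : ∀ j : Fin m, |sgn (bsel j)| = 1 := fun j => abs_sgn _
    have h2 : ∀ i : Fin n, |nu m b (colSet Sj i)| = 1 := by
      intro i
      rcases hnu1 i with h | h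
      · rw [h, nu_empty hm0 b]
        norm_num
      · rw [h, nu_eq hm0 b]
        have huniv : (Finset.univ : Finset (Fin m)) ≠ ∅ :=
          Finset.ne_empty_of_mem (Finset.mem_univ (⟨0, hm0⟩ : Fin m))
        rw [if_neg huniv, if_pos rfl, abs_sgn]
    rw [Finset.prod_congr rfl fun j _ => h1 j, Finset.prod_congr rfl fun i _ => h2 i,
      Finset.prod_const_one, Finset.prod_const_one, one_mul]
  have hone : polyProb (unifParity m b) (parityPred m b) g = 1 := by
    have h1 : sgn b * Eg = 1 ∨ sgn b * Eg = -1 := by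
      have h2 : |sgn b * Eg| = 1 := by rw [abs_mul, abs_sgn, one_mul, habsEg]
      rcases (abs_eq (by norm_num : (0:ℝ) ≤ 1)).mp h2 with h | h
      · exact Or.inl h
      · exact Or.inr h
    rcases h1 with h | h
    · rw [hidg]
      nlinarith
    · nlinarith
  have hpoly : IsGenPoly (parityPred m b) g := by
    intro x hx
    by_contra hmem
    have hWx : 0 < ∏ i, unifParity m b (x i) := by
      refine Finset.prod_pos fun i _ => ?_
      rw [unifParity, if_pos (hx i)]
      have hcgt : (0:ℝ) < ((parityPred m b).card : ℝ) := by
        rw [card_pred hm0 b]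
        positivity
      exact inv_pos.mpr hcgt
    have hterm : ∀ z : Fin n → (Fin m → Bool),
        0 ≤ (∏ i, unifParity m b (z i))
          - (∏ i, unifParity m b (z i)) *
            (if (fun j => g j fun i => z i j) ∈ parityPred m b then (1:ℝ) else 0) := by
      intro z
      have h1 : (if (fun j => g j fun i => z i j) ∈ parityPred m b then (1:ℝ) else 0) ≤ 1 := by
        split <;> norm_num
      nlinarith [hW0 z]
    have hge := Finset.single_le_sum
      (f := fun z : Fin n → (Fin m → Bool) =>
        (∏ i, unifParity m b (z i))
          - (∏ i, unifParity m b (z i)) *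
            (if (fun j => g j fun i => z i j) ∈ parityPred m b then (1:ℝ) else 0))
      (fun z _ => hterm z) (Finset.mem_univ x)
    rw [Finset.sum_sub_distrib, sum_w_one hm0 b] at hge
    have hindx : (if (fun j => g j fun i => x i j) ∈ parityPred m b then (1:ℝ) else 0) = 0 :=
      if_neg hmem
    rw [hindx, mul_zero, sub_zero] at hge
    have hpp : (∑ z : Fin n → (Fin m → Bool), (∏ i, unifParity m b (z i)) *
        (if (fun j => g j fun i => z i j) ∈ parityPred m b then (1:ℝ) else 0))
        = polyProb (unifParity m b) (parityPred m b) g := rfl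
    rw [hpp, hone] at hge
    linarith
  refine ⟨Sj (⟨0, hm0⟩ : Fin m), bsel, ?_, ?_⟩
  · intro j
    have := hdistj j
    rwa [hconst j] at this
  · have heq : (fun j => chi (Sj (⟨0, hm0⟩ : Fin m)) (bsel j)) = g := by
      funext j
      rw [hgdef, ← hconst j]
    rw [heq]
    exact hpoly
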